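/- Let G be a finite simple graph, let X be the set of all shortest paths of G (walks between some pair of vertices whose length equals the graph distance between them), and let A be a nonempty set of vertices of G. For each v ∈ A, define the hypothesis h_v : X → {0,1} by h_v(p) = 1 if and only if v is an interior vertex of p. Let BS(A) = max over shortest paths p ∈ X of the number of vertices of A that are interior vertices of p, and suppose BS(A) ≥ 1. Then every finite set S ⊆ X shattered by the family {h_v : v ∈ A} satisfies |S| ≤ ⌊log₂(BS(A))⌋ + 1; i.e., the VC-dimension of {h_v : v ∈ A} is at most ⌊log₂(BS(A))⌋ + 1. -/

import Mathlib

/-- VC-dimension bound for betweenness hypotheses: let `X` be the set of shortest paths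
of a finite graph `G` and, for each `v` in a nonempty vertex subset `A`, let the
hypothesis `h_v` map a shortest path to `1` iff `v` is one of its interior vertices
(i.e. `v` is visited at some position `i` with `0 < i < length`, equivalently `v` lies in
the image of `Finset.Ioo 0 length` under `getVert`). If `BS(A)` (with `BS(A) ≥ 1`) is the
maximum, over shortest paths `p`, of the number of vertices of `A` interior to `p`, then
every finite set `S` of shortest paths shattered by `{h_v : v ∈ A}` satisfies
`|S| ≤ ⌊log₂ BS(A)⌋ + 1`. -/
theorem stmt10 {V : Type*} [Fintype V] [DecidableEq V] (G : SimpleGraph V)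
    (A : Finset V) (hA : A.Nonempty)
    (BS : ℕ) (hBS1 : 1 ≤ BS)
    (hub : ∀ (s t : V) (p : G.Walk s t), p.length = G.dist s t →
      (A ∩ (Finset.Ioo 0 p.length).image p.getVert).card ≤ BS)
    (hmax : ∃ (s t : V) (p : G.Walk s t), p.length = G.dist s t ∧
      (A ∩ (Finset.Ioo 0 p.length).image p.getVert).card = BS)
    (S : Finset {q : Σ s t : V, G.Walk s t // q.2.2.length = G.dist q.1 q.2.1})
    (hshatter : ∀ f : {q : Σ s t : V, G.Walk s t // q.2.2.length = G.dist q.1 q.2.1} → Bool,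
      ∃ v ∈ A, ∀ q ∈ S,
        decide (v ∈ (Finset.Ioo 0 q.1.2.2.length).image q.1.2.2.getVert) = f q) :
    S.card ≤ Nat.log 2 BS + 1 := by
  classical
  rcases S.eq_empty_or_nonempty with rfl | ⟨q0, hq0⟩
  · simp
  have hch : ∀ T : Finset {q : Σ s t : V, G.Walk s t // q.2.2.length = G.dist q.1 q.2.1},
      ∃ v ∈ A, ∀ q ∈ S,
      decide (v ∈ (Finset.Ioo 0 q.1.2.2.length).image q.1.2.2.getVert)
        = decide (q ∈ insert q0 T) := fun T =>
    hshatter (fun q => decide (q ∈ insert q0 T))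
  choose g hgA hg using hch
  have hcard : (S.erase q0).powerset.card ≤
      (A ∩ (Finset.Ioo 0 q0.1.2.2.length).image q0.1.2.2.getVert).card := by
    apply Finset.card_le_card_of_injOn g
    · intro T hT
      rw [Finset.mem_coe, Finset.mem_inter]
      refine ⟨hgA T, ?_⟩
      have h1 := hg T q0 hq0
      rw [decide_eq_decide] at h1
      exact h1.mpr (Finset.mem_insert_self _ _)
    · intro T hT T' hT' h
      have hTs := Finset.mem_powerset.mp hT
      have hT's := Finset.mem_powerset.mp hT'
      ext q
      constructor
      · intro hq
        have hqS : q ∈ S := Finset.mem_of_mem_erase (hTs hq)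
        have hqne : q ≠ q0 := Finset.ne_of_mem_erase (hTs hq)
        have h1 := hg T q hqS
        have h2 := hg T' q hqS
        rw [h] at h1
        rw [h1, decide_eq_decide] at h2
        have := h2.mp (Finset.mem_insert_of_mem hq)
        rcases Finset.mem_insert.mp this with h' | h'
        · exact absurd h' hqne
        · exact h'
      · intro hq
        have hqS : q ∈ S := Finset.mem_of_mem_erase (hT's hq)
        have hqne : q ≠ q0 := Finset.ne_of_mem_erase (hT's hq)
        have h1 := hg T q hqS
        have h2 := hg T' q hqS
        rw [h] at h1
        rw [h1, decide_eq_decide] at h2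
        have := h2.mpr (Finset.mem_insert_of_mem hq)
        rcases Finset.mem_insert.mp this with h' | h'
        · exact absurd h' hqne
        · exact h'
  have hubq := hub q0.1.1 q0.1.2.1 q0.1.2.2 q0.2
  have hpow : 2 ^ (S.card - 1) ≤ BS := by
    have := hcard.trans hubq
    rwa [Finset.card_powerset, Finset.card_erase_of_mem hq0] at this
  have hlog : S.card - 1 ≤ Nat.log 2 BS :=
    (Nat.le_log_iff_pow_le one_lt_two (by omega)).mpr hpow
  omega
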